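/- Let A, B be bounded self-adjoint operators with A positive. If AB = UBA for some unitary U, then AB = BA. -/

import Mathlib

set_option maxHeartbeats 1000000
set_option synthInstance.maxHeartbeats 400000


variable {H : Type*} [NormedAddCommGroup H] [InnerProductSpace ℂ H] [CompleteSpace H]

theorem stmt18 (A B : H →L[ℂ] H)
    (hA : A.IsPositive) (hB : IsSelfAdjoint B)
    (h : ∃ U ∈ unitary (H →L[ℂ] H), A * B = U * (B * A)) :
    A * B = B * A := by
  obtain ⟨U, hU, h⟩ := h
  have hAsa : IsSelfAdjoint A := hA.isSelfAdjoint
  have hA0 : (0 : H →L[ℂ] H) ≤ A := (ContinuousLinearMap.nonneg_iff_isPositive A).mpr hA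
  have hadj : B * A = (A * B) * star U := by
    calc B * A = star (A * B) := by rw [star_mul, hAsa.star_eq, hB.star_eq]
    _ = star (U * (B * A)) := by rw [h]
    _ = star (B * A) * star U := by rw [star_mul]
    _ = (A * B) * star U := by rw [star_mul, hAsa.star_eq, hB.star_eq]
  have hBA_U : (B * A) * U = A * B := by
    rw [hadj, mul_assoc, (Unitary.mem_iff.mp hU).1, mul_one]
  have hcomm : U * (B * A) = (B * A) * U := by rw [← h, hBA_U]
  have hTstar : star (B * A) = U * (B * A) := by
    rw [star_mul, hAsa.star_eq, hB.star_eq, h]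
  have hnormal : IsStarNormal (B * A) := ⟨by
    show star (B * A) * (B * A) = (B * A) * star (B * A)
    rw [hTstar, ← mul_assoc (B*A) U (B*A), ← hcomm]⟩
  set C := CFC.sqrt A with hCdef
  have hC0 : (0 : H →L[ℂ] H) ≤ C := CFC.sqrt_nonneg (a := A)
  have hCsa : IsSelfAdjoint C := IsSelfAdjoint.of_nonneg hC0
  have hCC : C * C = A := by
    have := CFC.sq_sqrt A hA0
    rwa [sq] at this
  have hCBCsa : IsSelfAdjoint (C * (B * C)) := by
    rw [isSelfAdjoint_iff, star_mul, star_mul, hCsa.star_eq, hB.star_eq, mul_assoc]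
  have hres : SpectrumRestricts (B * A) Complex.reCLM := by
    refine .of_rightInvOn Complex.ofReal_re fun x hx ↦ ?_
    rcases eq_or_ne x 0 with rfl | hx0
    · simp
    · have hmem : x ∈ spectrum ℂ (C * (B * C)) := by
        have h1 : x ∈ spectrum ℂ ((B * C) * C) \ {0} := by
          constructor
          · rw [mul_assoc, hCC]; exact hx
          · simpa using hx0
        have h2 : x ∈ spectrum ℂ (C * (B * C)) \ {0} := by
          rw [← spectrum.nonzero_mul_comm]; exact h1
        exact h2.1
      have := hCBCsa.spectrumRestricts.rightInvOn hmem
      simpa using this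
  have hTsa : IsSelfAdjoint (B * A) :=
    isSelfAdjoint_iff_isStarNormal_and_quasispectrumRestricts.mpr ⟨hnormal, hres⟩
  calc A * B = star (B * A) := by rw [star_mul, hAsa.star_eq, hB.star_eq]
  _ = B * A := hTsa.star_eq
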